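/- Let α and β be exponent sequences such that Λ_1(β) is nuclear (i.e., for every positive integer k there exists an integer l > k with ∑_{n=0}^∞ e^{β_n(1/l − 1/k)} < ∞). Let θ : ℕ → ℂ satisfy |θ_n| ≤ C₀ e^{-α_n/m₀} for all n, for some positive integer m₀ and C₀ > 0 (θ belongs to the dual of Λ_1(α)). Then there exists a positive integer m such that for every positive integer k there is C > 0 with ∑_{j=0}^∞ |θ_{j+n}| · e^{-β_j/k} ≤ C · e^{-α_n/m} for all n ∈ ℕ (i.e., the Hankel operator H_θ : Λ_1(α) → Λ_1(β) is continuous and satisfies the compactness condition, the index m being independent of k). -/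
import Mathlib


/-- Let `α`, `β` be exponent sequences with `Λ_1(β)` nuclear. Then for
every `θ` in the dual of `Λ_1(α)`, the Hankel operator `H_θ : Λ_1(α) → Λ_1(β)` is
continuous and satisfies the compactness condition (the index `m` is independent
of `k`). -/
theorem hankel_finite_to_nuclear_finite_compact
    (α β : ℕ → ℝ) (θ : ℕ → ℂ)
    (hα_nonneg : ∀ n, 0 ≤ α n) (hα_mono : Monotone α)
    (hα_tendsto : Filter.Tendsto α Filter.atTop Filter.atTop)
    (hβ_nonneg : ∀ n, 0 ≤ β n) (hβ_mono : Monotone β)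
    (hβ_tendsto : Filter.Tendsto β Filter.atTop Filter.atTop)
    (hβ_nuclear : ∀ k : ℕ, 0 < k → ∃ l : ℕ, k < l ∧
      Summable fun n : ℕ => Real.exp (β n * (1 / (l : ℝ) - 1 / (k : ℝ))))
    (hθ : ∃ m₀ : ℕ, 0 < m₀ ∧ ∃ C₀ : ℝ, 0 < C₀ ∧
      ∀ n : ℕ, ‖θ n‖ ≤ C₀ * Real.exp (-α n / (m₀ : ℝ))) :
    ∃ m : ℕ, 0 < m ∧ ∀ k : ℕ, 0 < k → ∃ C : ℝ, 0 < C ∧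
      ∀ n : ℕ, (∑' j : ℕ, ‖θ (j + n)‖ * Real.exp (-β j / (k : ℝ))) ≤
        C * Real.exp (-α n / (m : ℝ)) := by
  obtain ⟨m₀, hm₀, C₀, hC₀, hθb⟩ := hθ
  refine ⟨m₀, hm₀, fun k hk => ?_⟩
  obtain ⟨l, hkl, hsum⟩ := hβ_nuclear k hk
  -- summability of j ↦ exp(-β j / k)
  have hkpos : (0:ℝ) < k := by exact_mod_cast hk
  have hS : Summable fun j : ℕ => Real.exp (-β j / (k : ℝ)) := by
    refine hsum.of_nonneg_of_le (fun j => (Real.exp_pos _).le) (fun j => ?_)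
    apply Real.exp_le_exp.mpr
    have hl : (0:ℝ) < l := by exact_mod_cast hk.trans hkl
    have : -β j / (k:ℝ) = β j * (0 - 1 / (k:ℝ)) := by ring
    rw [this]
    apply mul_le_mul_of_nonneg_left _ (hβ_nonneg j)
    have : (0:ℝ) ≤ 1 / (l:ℝ) := by positivity
    linarith
  set S : ℝ := ∑' j : ℕ, Real.exp (-β j / (k : ℝ)) with hSdef
  have hSpos : 0 < S := by
    exact Summable.tsum_pos hS (fun j => (Real.exp_pos _).le) 0 (Real.exp_pos _)
  refine ⟨C₀ * S, by positivity, fun n => ?_⟩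
  have hterm : ∀ j : ℕ, ‖θ (j + n)‖ * Real.exp (-β j / (k : ℝ)) ≤
      (C₀ * Real.exp (-α n / (m₀ : ℝ))) * Real.exp (-β j / (k : ℝ)) := by
    intro j
    apply mul_le_mul_of_nonneg_right _ (Real.exp_pos _).le
    calc ‖θ (j + n)‖ ≤ C₀ * Real.exp (-α (j + n) / (m₀ : ℝ)) := hθb _
      _ ≤ C₀ * Real.exp (-α n / (m₀ : ℝ)) := by
          apply mul_le_mul_of_nonneg_left _ hC₀.le
          apply Real.exp_le_exp.mpr
          have hmpos : (0:ℝ) < m₀ := by exact_mod_cast hm₀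
          have h := hα_mono (Nat.le_add_left n j)
          gcongr
  have hLHS : Summable fun j : ℕ => ‖θ (j + n)‖ * Real.exp (-β j / (k : ℝ)) := by
    refine Summable.of_nonneg_of_le (fun j => by positivity) hterm ?_
    exact (hS.mul_left _)
  calc (∑' j : ℕ, ‖θ (j + n)‖ * Real.exp (-β j / (k : ℝ)))
      ≤ ∑' j : ℕ, (C₀ * Real.exp (-α n / (m₀ : ℝ))) * Real.exp (-β j / (k : ℝ)) :=
        Summable.tsum_le_tsum hterm hLHS (hS.mul_left _)
    _ = (C₀ * Real.exp (-α n / (m₀ : ℝ))) * S := by rw [tsum_mul_left]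
    _ = C₀ * S * Real.exp (-α n / (m₀ : ℝ)) := by ring
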